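/- Let θ > 0 and let x, y > 0 solve the boundary-law system x = (x² + θy² + θ²)/(θ²x² + θy² + 1), y = (θx² + y² + θ)/(θ²x² + θy² + 1). For t, u ≥ 0 with t + u ≤ 1 define f(t, u, θ) = x²t/((x² − θy²)t + θ(θ − y²)u + θy²) − x²θ²t/(θ(θx² − y²)t + (1 − θy²)u + θy²) and g(t, u, θ) = u/(θ(θx² − y²)t + (1 − θy²)u + θy²) − θ²u/((x² − θy²)t + θ(θ − y²)u + θy²). Then |f(t, u, θ)| ≤ |1 − θ²|/(1 + θ²) and |g(t, u, θ)| ≤ |1 − θ²|/(1 + θ²). -/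

import Mathlib

set_option maxHeartbeats 1000000


/-- For a positive solution `(x, y)` of the boundary-law system and
`t, u ≥ 0`, `t + u ≤ 1`, the functions `f(t,u,θ) = p⁰(0) - p²(0)` and
`g(t,u,θ) = p²(2) - p⁰(2)` satisfy `|f| ≤ |1 - θ²|/(1 + θ²)` and `|g| ≤ |1 - θ²|/(1 + θ²)`. -/
theorem sos_gamma_bound (θ x y : ℝ) (hθ : 0 < θ) (hx : 0 < x) (hy : 0 < y)
    (h1 : x = (x ^ 2 + θ * y ^ 2 + θ ^ 2) / (θ ^ 2 * x ^ 2 + θ * y ^ 2 + 1))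
    (h2 : y = (θ * x ^ 2 + y ^ 2 + θ) / (θ ^ 2 * x ^ 2 + θ * y ^ 2 + 1)) :
    ∀ t u : ℝ, 0 ≤ t → 0 ≤ u → t + u ≤ 1 →
      |x ^ 2 * t / ((x ^ 2 - θ * y ^ 2) * t + θ * (θ - y ^ 2) * u + θ * y ^ 2)
          - x ^ 2 * θ ^ 2 * t / (θ * (θ * x ^ 2 - y ^ 2) * t + (1 - θ * y ^ 2) * u + θ * y ^ 2)|
        ≤ |1 - θ ^ 2| / (1 + θ ^ 2) ∧
      |u / (θ * (θ * x ^ 2 - y ^ 2) * t + (1 - θ * y ^ 2) * u + θ * y ^ 2)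
          - θ ^ 2 * u / ((x ^ 2 - θ * y ^ 2) * t + θ * (θ - y ^ 2) * u + θ * y ^ 2)|
        ≤ |1 - θ ^ 2| / (1 + θ ^ 2) := by
  intro t u ht hu htu
  have hs : (0:ℝ) ≤ 1 - t - u := by linarith
  have ha : 0 < x ^ 2 := by positivity
  have hb : 0 < θ ^ 2 := by positivity
  have hc : 0 < θ * y ^ 2 := by positivity
  have convex_pos : ∀ a b c : ℝ, 0 < a → 0 < b → 0 < c →
      0 < t * a + u * b + (1 - t - u) * c := by
    intro a b c ha' hb' hc'
    have hm : 0 < min (min a b) c := lt_min (lt_min ha' hb') hc'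
    have h1' : min (min a b) c ≤ a := le_trans (min_le_left _ _) (min_le_left _ _)
    have h2' : min (min a b) c ≤ b := le_trans (min_le_left _ _) (min_le_right _ _)
    have h3' : min (min a b) c ≤ c := min_le_right _ _
    nlinarith [mul_le_mul_of_nonneg_left h1' ht, mul_le_mul_of_nonneg_left h2' hu,
      mul_le_mul_of_nonneg_left h3' hs]
  have hD1 : 0 < (x ^ 2 - θ * y ^ 2) * t + θ * (θ - y ^ 2) * u + θ * y ^ 2 := by
    have := convex_pos (x ^ 2) (θ ^ 2) (θ * y ^ 2) ha hb hc
    nlinarith [this]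
  have hD2 : 0 < θ * (θ * x ^ 2 - y ^ 2) * t + (1 - θ * y ^ 2) * u + θ * y ^ 2 := by
    have := convex_pos (θ ^ 2 * x ^ 2) 1 (θ * y ^ 2) (by positivity) one_pos hc
    nlinarith [this]
  set D1 := (x ^ 2 - θ * y ^ 2) * t + θ * (θ - y ^ 2) * u + θ * y ^ 2 with hD1def
  set D2 := θ * (θ * x ^ 2 - y ^ 2) * t + (1 - θ * y ^ 2) * u + θ * y ^ 2 with hD2def
  have hDD : 0 < D1 * D2 := mul_pos hD1 hD2
  have hden : (0:ℝ) < 1 + θ ^ 2 := by positivity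
  -- core polynomial inequalities
  have ineq1 : x ^ 2 * t * (u * (1 + θ ^ 2) + (1 - t - u) * (θ * y ^ 2)) * (1 + θ ^ 2)
      ≤ D1 * D2 := by
    rw [hD1def, hD2def]
    nlinarith [mul_nonneg hb.le (sq_nonneg (t * x ^ 2 - u)),
      mul_nonneg (mul_nonneg hu hs) hc.le,
      mul_nonneg hb.le (mul_nonneg (mul_nonneg hu hs) hc.le),
      sq_nonneg ((1 - t - u) * (θ * y ^ 2))]
  have ineq2 : u * (t * x ^ 2 * (1 + θ ^ 2) + (1 - t - u) * (θ * y ^ 2)) * (1 + θ ^ 2)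
      ≤ D1 * D2 := by
    rw [hD1def, hD2def]
    nlinarith [mul_nonneg hb.le (sq_nonneg (t * x ^ 2 - u)),
      mul_nonneg (mul_nonneg (mul_nonneg ht ha.le) hs) hc.le,
      mul_nonneg hb.le (mul_nonneg (mul_nonneg (mul_nonneg ht ha.le) hs) hc.le),
      sq_nonneg ((1 - t - u) * (θ * y ^ 2))]
  have hC1 : (0:ℝ) ≤ x ^ 2 * t * (u * (1 + θ ^ 2) + (1 - t - u) * (θ * y ^ 2)) := by
    have : (0:ℝ) ≤ u * (1 + θ ^ 2) + (1 - t - u) * (θ * y ^ 2) := by positivity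
    positivity
  have hC2 : (0:ℝ) ≤ u * (t * x ^ 2 * (1 + θ ^ 2) + (1 - t - u) * (θ * y ^ 2)) := by
    have : (0:ℝ) ≤ t * x ^ 2 * (1 + θ ^ 2) + (1 - t - u) * (θ * y ^ 2) := by positivity
    positivity
  constructor
  · have expand : x ^ 2 * t / D1 - x ^ 2 * θ ^ 2 * t / D2
        = (1 - θ ^ 2) * (x ^ 2 * t * (u * (1 + θ ^ 2) + (1 - t - u) * (θ * y ^ 2)))
          / (D1 * D2) := by
      rw [hD1def, hD2def]
      have e1 : (x ^ 2 - θ * y ^ 2) * t + θ * (θ - y ^ 2) * u + θ * y ^ 2 ≠ 0 := hD1.ne'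
      have e2 : θ * (θ * x ^ 2 - y ^ 2) * t + (1 - θ * y ^ 2) * u + θ * y ^ 2 ≠ 0 := hD2.ne'
      rw [div_sub_div _ _ e1 e2, div_eq_div_iff (mul_ne_zero e1 e2) (mul_ne_zero e1 e2)]
      ring
    rw [expand, abs_div, abs_of_pos hDD, div_le_div_iff₀ hDD hden, abs_mul,
      abs_of_nonneg hC1]
    nlinarith [mul_le_mul_of_nonneg_left ineq1 (abs_nonneg (1 - θ ^ 2))]
  · have expand : u / D2 - θ ^ 2 * u / D1
        = (1 - θ ^ 2) * (u * (t * x ^ 2 * (1 + θ ^ 2) + (1 - t - u) * (θ * y ^ 2)))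
          / (D1 * D2) := by
      rw [hD1def, hD2def]
      have e1 : (x ^ 2 - θ * y ^ 2) * t + θ * (θ - y ^ 2) * u + θ * y ^ 2 ≠ 0 := hD1.ne'
      have e2 : θ * (θ * x ^ 2 - y ^ 2) * t + (1 - θ * y ^ 2) * u + θ * y ^ 2 ≠ 0 := hD2.ne'
      rw [div_sub_div _ _ e2 e1, div_eq_div_iff (mul_ne_zero e2 e1) (mul_ne_zero e1 e2)]
      ring
    rw [expand, abs_div, abs_of_pos hDD, div_le_div_iff₀ hDD hden, abs_mul,
      abs_of_nonneg hC2]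
    nlinarith [mul_le_mul_of_nonneg_left ineq2 (abs_nonneg (1 - θ ^ 2))]
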